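/- The map f ↦ (f·ā mod φ₁, f·b̄ mod φ₂) restricts to an F_q-linear isomorphism from the ideal ⟨ḡ(x)⟩ of F_q[x]/⟨φ₁φ₂/φ₃⟩ onto the code C̄_{ā,b̄}. -/
import Mathlib


open Polynomial

/-- If `x * y` is squarefree in a Euclidean domain, then `x` and `y` are coprime. -/
lemma sqfCop {α : Type*} [EuclideanDomain α] [DecidableEq α] {x y : α}
    (h : Squarefree (x * y)) : IsCoprime x y :=
  EuclideanDomain.gcd_isUnit_iff.mp <| h _ <|
    mul_dvd_mul (EuclideanDomain.gcd_dvd_left x y) (EuclideanDomain.gcd_dvd_right x y)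

/-- If `x * y` is squarefree and `gcd y a ∣ x`, then `y` and `a` are coprime. -/
lemma sqfCop' {α : Type*} [EuclideanDomain α] [DecidableEq α] {x y a : α}
    (h : Squarefree (x * y)) (hd : EuclideanDomain.gcd y a ∣ x) : IsCoprime y a :=
  EuclideanDomain.gcd_isUnit_iff.mp <| h _ <|
    mul_dvd_mul hd (EuclideanDomain.gcd_dvd_left y a)

/-- The map `f ↦ (f·ā mod φ₁, f·b̄ mod φ₂)` restricts to an `F_q`-linear isomorphism from
the ideal `⟨ḡ⟩` of `F_q[x]/⟨φ₁φ₂/φ₃⟩` onto the code `C̄_{ā,b̄}`.  (Stated via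
representatives through the surjection `mk ψ : F_q[x] → F_q[x]/⟨ψ⟩`, `ψ = φ₁φ₂/φ₃`:
the restriction is injective and its image is the whole code; linearity is that of the
ambient map.) -/
theorem quasiCyclic_restriction_isomorphism (F : Type) [Field F] [Fintype F] [DecidableEq F]
    (φ₁ φ₂ : Polynomial F) (hm₁ : φ₁.Monic) (hm₂ : φ₂.Monic)
    (hsq₁ : Squarefree φ₁) (hsq₂ : Squarefree φ₂)
    (φ₃ : Polynomial F) (hφ₃ : φ₃ = EuclideanDomain.gcd φ₁ φ₂)
    (ψ : Polynomial F) (hψ : ψ = φ₁ * φ₂ / φ₃)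
    (a b : Polynomial F)
    (g : Polynomial F)
    (hg : g = EuclideanDomain.gcd a (φ₁ / φ₃) * EuclideanDomain.gcd b (φ₂ / φ₃) *
      EuclideanDomain.gcd (EuclideanDomain.gcd a b) φ₃) :
    (∀ f₁ f₂ : Polynomial F,
        AdjoinRoot.mk ψ f₁ ∈ Ideal.span {AdjoinRoot.mk ψ g} →
        AdjoinRoot.mk ψ f₂ ∈ Ideal.span {AdjoinRoot.mk ψ g} →
        AdjoinRoot.mk φ₁ (f₁ * a) = AdjoinRoot.mk φ₁ (f₂ * a) →
        AdjoinRoot.mk φ₂ (f₁ * b) = AdjoinRoot.mk φ₂ (f₂ * b) →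
        AdjoinRoot.mk ψ f₁ = AdjoinRoot.mk ψ f₂) ∧
      (∀ f : Polynomial F, ∃ f' : Polynomial F,
        AdjoinRoot.mk ψ f' ∈ Ideal.span {AdjoinRoot.mk ψ g} ∧
        AdjoinRoot.mk φ₁ (f' * a) = AdjoinRoot.mk φ₁ (f * a) ∧
        AdjoinRoot.mk φ₂ (f' * b) = AdjoinRoot.mk φ₂ (f * b)) := by
  have hφ₁0 : φ₁ ≠ 0 := hm₁.ne_zero
  have hφ₂0 : φ₂ ≠ 0 := hm₂.ne_zero
  have h31 : φ₃ ∣ φ₁ := hφ₃ ▸ EuclideanDomain.gcd_dvd_left _ _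
  have h32 : φ₃ ∣ φ₂ := hφ₃ ▸ EuclideanDomain.gcd_dvd_right _ _
  have hφ₃0 : φ₃ ≠ 0 := by
    rw [hφ₃]
    simp [EuclideanDomain.gcd_eq_zero_iff, hφ₁0]
  set r₁ := φ₁ / φ₃ with hr₁
  set r₂ := φ₂ / φ₃ with hr₂
  have e₁ : φ₃ * r₁ = φ₁ := EuclideanDomain.mul_div_cancel' hφ₃0 h31
  have e₂ : φ₃ * r₂ = φ₂ := EuclideanDomain.mul_div_cancel' hφ₃0 h32
  have hr₁0 : r₁ ≠ 0 := fun h => hφ₁0 (by rw [← e₁, h, mul_zero])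
  have hr₂0 : r₂ ≠ 0 := fun h => hφ₂0 (by rw [← e₂, h, mul_zero])
  -- ψ = φ₃ * r₁ * r₂
  have hψe : ψ = φ₃ * r₁ * r₂ := by
    have hmul : φ₁ * φ₂ = φ₃ * (φ₃ * r₁ * r₂) := by rw [← e₁, ← e₂]; ring
    have := EuclideanDomain.mul_div_cancel' hφ₃0 (Dvd.intro _ hmul.symm)
    rw [hψ]
    exact mul_left_cancel₀ hφ₃0 (by rw [this, hmul])
  -- squarefree facts
  have hsqr₂ : Squarefree r₂ := hsq₂.squarefree_of_dvd ⟨φ₃, by rw [← e₂]; ring⟩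
  have hsqψ : Squarefree ψ := by
    have hcop : IsCoprime φ₁ r₂ := by
      apply EuclideanDomain.gcd_isUnit_iff.mp
      apply hsq₂
      have hc1 : EuclideanDomain.gcd φ₁ r₂ ∣ φ₃ := by
        rw [hφ₃]
        exact EuclideanDomain.dvd_gcd (EuclideanDomain.gcd_dvd_left _ _)
          ((EuclideanDomain.gcd_dvd_right φ₁ r₂).trans ⟨φ₃, by rw [← e₂]; ring⟩)
      calc EuclideanDomain.gcd φ₁ r₂ * EuclideanDomain.gcd φ₁ r₂
          ∣ φ₃ * r₂ := mul_dvd_mul hc1 (EuclideanDomain.gcd_dvd_right _ _)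
        _ = φ₂ := e₂
    have : ψ = φ₁ * r₂ := by rw [hψe, ← e₁]
    rw [this]
    exact squarefree_mul_iff.mpr ⟨hcop.isRelPrime, hsq₁, hsqr₂⟩
  -- the six pieces
  set g₁ := EuclideanDomain.gcd a r₁ with hg₁
  set g₂ := EuclideanDomain.gcd b r₂ with hg₂
  set g₃ := EuclideanDomain.gcd (EuclideanDomain.gcd a b) φ₃ with hg₃
  have hg₁0 : g₁ ≠ 0 := by
    rw [hg₁]; intro h; exact hr₁0 (EuclideanDomain.gcd_eq_zero_iff.mp h).2
  have hg₂0 : g₂ ≠ 0 := by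
    rw [hg₂]; intro h; exact hr₂0 (EuclideanDomain.gcd_eq_zero_iff.mp h).2
  have hg₃0 : g₃ ≠ 0 := by
    rw [hg₃]; intro h; exact hφ₃0 (EuclideanDomain.gcd_eq_zero_iff.mp h).2
  set s₁ := r₁ / g₁ with hs₁
  set s₂ := r₂ / g₂ with hs₂
  set t := φ₃ / g₃ with ht
  have es₁ : g₁ * s₁ = r₁ :=
    EuclideanDomain.mul_div_cancel' hg₁0 (EuclideanDomain.gcd_dvd_right a r₁)
  have es₂ : g₂ * s₂ = r₂ :=
    EuclideanDomain.mul_div_cancel' hg₂0 (EuclideanDomain.gcd_dvd_right b r₂)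
  have e₃ : g₃ * t = φ₃ :=
    EuclideanDomain.mul_div_cancel' hg₃0 (EuclideanDomain.gcd_dvd_right _ φ₃)
  have hgprod : g = g₁ * g₂ * g₃ := hg
  have hψ6 : ψ = g₁ * g₂ * g₃ * (s₁ * (s₂ * t)) := by
    rw [hψe, ← e₃, ← es₁, ← es₂]; ring
  -- coprimality tool
  have cop : ∀ x y : Polynomial F, x * y ∣ ψ → IsCoprime x y := fun x y hd =>
    sqfCop (hsqψ.squarefree_of_dvd hd)
  -- divisibilities of a and b by pieces
  have hg₁a : g₁ ∣ a := EuclideanDomain.gcd_dvd_left a r₁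
  have hg₂b : g₂ ∣ b := EuclideanDomain.gcd_dvd_left b r₂
  have hg₃a : g₃ ∣ a :=
    (EuclideanDomain.gcd_dvd_left _ φ₃).trans (EuclideanDomain.gcd_dvd_left a b)
  have hg₃b : g₃ ∣ b :=
    (EuclideanDomain.gcd_dvd_left _ φ₃).trans (EuclideanDomain.gcd_dvd_right a b)
  -- key coprimality facts
  have cops₁a : IsCoprime s₁ a := by
    apply sqfCop' (x := g₁)
    · rw [es₁]; exact hsq₁.squarefree_of_dvd ⟨φ₃, by rw [← e₁]; ring⟩
    · exact EuclideanDomain.dvd_gcd (EuclideanDomain.gcd_dvd_right s₁ a)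
        ((EuclideanDomain.gcd_dvd_left s₁ a).trans ⟨g₁, by rw [← es₁]; ring⟩)
  have cops₂b : IsCoprime s₂ b := by
    apply sqfCop' (x := g₂)
    · rw [es₂]; exact hsqr₂
    · exact EuclideanDomain.dvd_gcd (EuclideanDomain.gcd_dvd_right s₂ b)
        ((EuclideanDomain.gcd_dvd_left s₂ b).trans ⟨g₂, by rw [← es₂]; ring⟩)
  have copt : IsCoprime t (EuclideanDomain.gcd a b) := by
    apply sqfCop' (x := g₃)
    · rw [e₃]; exact hsq₁.squarefree_of_dvd h31
    · exact EuclideanDomain.dvd_gcd (EuclideanDomain.gcd_dvd_right _ _)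
        ((EuclideanDomain.gcd_dvd_left t _).trans ⟨g₃, by rw [← e₃]; ring⟩)
  -- piece divisibilities into φ₁, φ₂
  have hs₁φ₁ : s₁ ∣ φ₁ := ⟨φ₃ * g₁, by rw [← e₁, ← es₁]; ring⟩
  have hs₂φ₂ : s₂ ∣ φ₂ := ⟨φ₃ * g₂, by rw [← e₂, ← es₂]; ring⟩
  have htφ₁ : t ∣ φ₁ := ⟨g₃ * r₁, by rw [← e₁, ← e₃]; ring⟩
  have htφ₂ : t ∣ φ₂ := ⟨g₃ * r₂, by rw [← e₂, ← e₃]; ring⟩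
  have hgψ : g ∣ ψ := ⟨s₁ * (s₂ * t), by rw [hψ6, hgprod]⟩
  constructor
  · -- injectivity
    intro f₁ f₂ h₁ h₂ ha hb
    obtain ⟨z₁, hz₁⟩ := Ideal.mem_span_singleton.mp h₁
    obtain ⟨u₁, rfl⟩ := AdjoinRoot.mk_surjective z₁
    obtain ⟨z₂, hz₂⟩ := Ideal.mem_span_singleton.mp h₂
    obtain ⟨u₂, rfl⟩ := AdjoinRoot.mk_surjective z₂
    have hd₁ : ψ ∣ f₁ - g * u₁ := AdjoinRoot.mk_eq_mk.mp (by rw [hz₁, ← map_mul])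
    have hd₂ : ψ ∣ f₂ - g * u₂ := AdjoinRoot.mk_eq_mk.mp (by rw [hz₂, ← map_mul])
    set d := f₁ - f₂ with hdd
    have hgd : g ∣ d := by
      have hrw : d = (f₁ - g * u₁) - (f₂ - g * u₂) + g * (u₁ - u₂) := by rw [hdd]; ring
      rw [hrw]
      exact dvd_add (dvd_sub (hgψ.trans hd₁) (hgψ.trans hd₂)) (Dvd.intro _ rfl)
    have had : φ₁ ∣ d * a := by
      have := AdjoinRoot.mk_eq_mk.mp ha
      rwa [show f₁ * a - f₂ * a = d * a by rw [hdd]; ring] at this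
    have hbd : φ₂ ∣ d * b := by
      have := AdjoinRoot.mk_eq_mk.mp hb
      rwa [show f₁ * b - f₂ * b = d * b by rw [hdd]; ring] at this
    have hs₁d : s₁ ∣ d := cops₁a.dvd_of_dvd_mul_right (hs₁φ₁.trans had)
    have hs₂d : s₂ ∣ d := cops₂b.dvd_of_dvd_mul_right (hs₂φ₂.trans hbd)
    have htd : t ∣ d := by
      apply copt.dvd_of_dvd_mul_right
      have hexp : d * EuclideanDomain.gcd a b =
          (d * a) * EuclideanDomain.gcdA a b + (d * b) * EuclideanDomain.gcdB a b := by
        rw [EuclideanDomain.gcd_eq_gcd_ab a b]; ring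
      rw [hexp]
      exact dvd_add (dvd_mul_of_dvd_left (htφ₁.trans had) _)
        (dvd_mul_of_dvd_left (htφ₂.trans hbd) _)
    have c12 : IsCoprime s₁ s₂ := cop _ _ ⟨g₁ * g₂ * g₃ * t, by rw [hψ6]; ring⟩
    have c12t : IsCoprime (s₁ * s₂) t := cop _ _ ⟨g₁ * g₂ * g₃, by rw [hψ6]; ring⟩
    have cgS : IsCoprime g (s₁ * s₂ * t) := by
      rw [hgprod]
      exact cop _ _ ⟨1, by rw [hψ6]; ring⟩
    have hψd : ψ ∣ d := by
      have : ψ = g * (s₁ * s₂ * t) := by rw [hψ6, hgprod]; ring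
      rw [this]
      exact cgS.mul_dvd hgd (c12t.mul_dvd (c12.mul_dvd hs₁d hs₂d) htd)
    exact AdjoinRoot.mk_eq_mk.mpr hψd
  · -- surjectivity
    intro f
    have cgS : IsCoprime g (s₁ * (s₂ * t)) := by
      rw [hgprod]
      exact cop _ _ ⟨1, by rw [hψ6]; ring⟩
    obtain ⟨u, v, huv⟩ := cgS
    rw [hgprod] at huv
    refine ⟨g * (u * f), Ideal.mem_span_singleton.mpr ⟨AdjoinRoot.mk ψ (u * f), map_mul _ _ _⟩,
      ?_, ?_⟩
    · -- mod φ₁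
      have c13 : IsCoprime g₁ g₃ := cop _ _ ⟨g₂ * (s₁ * (s₂ * t)), by rw [hψ6]; ring⟩
      obtain ⟨w, hw⟩ := c13.mul_dvd hg₁a hg₃a
      apply AdjoinRoot.mk_eq_mk.mpr
      refine ⟨-(v * (s₂ * (f * w))), ?_⟩
      rw [hw, ← e₁, ← es₁, ← e₃, hgprod]
      linear_combination (f * (g₁ * g₃ * w)) * huv
    · -- mod φ₂
      have c23 : IsCoprime g₂ g₃ := cop _ _ ⟨g₁ * (s₁ * (s₂ * t)), by rw [hψ6]; ring⟩
      obtain ⟨w, hw⟩ := c23.mul_dvd hg₂b hg₃b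
      apply AdjoinRoot.mk_eq_mk.mpr
      refine ⟨-(v * (s₁ * (f * w))), ?_⟩
      rw [hw, ← e₂, ← es₂, ← e₃, hgprod]
      linear_combination (f * (g₂ * g₃ * w)) * huv
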